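/- Let d ≥ 4 be even. Suppose α, β and α′, β′ are two pairs of fixed-point-free involutions of Fin d such that both subgroups ⟨α, β⟩ and ⟨α′, β′⟩ act transitively on Fin d. Then the pairs are simultaneously conjugate: there exists a permutation λ of Fin d with λ ∘ α ∘ λ⁻¹ = α′ and λ ∘ β ∘ λ⁻¹ = β′. -/

import Mathlib

open Equiv Function

lemma fpf_key (d : ℕ) (hd : 4 ≤ d) (hdeven : Even d)
    (α β : Equiv.Perm (Fin d))
    (hα : α * α = 1) (hαf : ∀ x : Fin d, α x ≠ x)
    (hβ : β * β = 1) (hβf : ∀ x : Fin d, β x ≠ x)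
    (htrans : MulAction.IsPretransitive (Subgroup.closure {α, β}) (Fin d)) :
    ∃ f : ZMod d → Fin d, Function.Bijective f ∧
      (∀ i : ZMod d, α (f i) = f (if Even i.val then i + 1 else i - 1)) ∧
      (∀ i : ZMod d, β (f i) = f (if Even i.val then i - 1 else i + 1)) := by
  haveI : NeZero d := ⟨by omega⟩
  haveI : Fact (1 < d) := ⟨by omega⟩
  set x0 : Fin d := ⟨0, by omega⟩ with hx0def
  set σ : Equiv.Perm (Fin d) := β * α with hσdef
  have c1 : σ * α = β := by rw [hσdef, mul_assoc, hα, mul_one]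
  have c2 : β * σ = α := by rw [hσdef, ← mul_assoc, hβ, one_mul]
  have hσασ : σ * α * σ = α := by rw [c1, c2]
  have hk : ∀ k : ℕ, σ ^ k * α * σ ^ k = α := by
    intro k
    induction k with
    | zero => simp
    | succ k ih =>
      have : σ ^ (k+1) * α * σ ^ (k+1) = σ * (σ ^ k * α * σ ^ k) * σ := by
        group
      rw [this, ih, hσασ]
  have hβσ : ∀ k : ℕ, β * σ ^ (k+1) = α * σ ^ k := by
    intro k
    rw [pow_succ', ← mul_assoc, c2]
  -- pointwise versions
  have pαα : ∀ x : Fin d, α (α x) = x := fun x => by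
    have := DFunLike.congr_fun hα x
    simpa [Equiv.Perm.mul_apply] using this
  have pσα : ∀ (k : ℕ) (x : Fin d), (σ ^ k) (α ((σ ^ k) x)) = α x := fun k x => by
    have := DFunLike.congr_fun (hk k) x
    simpa [Equiv.Perm.mul_apply] using this
  have pβσ : ∀ (k : ℕ) (x : Fin d), β ((σ ^ (k+1)) x) = α ((σ ^ k) x) := fun k x => by
    have := DFunLike.congr_fun (hβσ k) x
    simpa [Equiv.Perm.mul_apply] using this
  have pβα : ∀ x : Fin d, β (α x) = σ x := fun x => by
    rw [hσdef]; rfl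
  set n : ℕ := orderOf σ with hndef
  have hn : 0 < n := orderOf_pos σ
  have hσn : ∀ x : Fin d, (σ ^ n) x = x := fun x => by
    rw [pow_orderOf_eq_one]; rfl
  -- the reachable set
  set inS : Fin d → Prop := fun y => ∃ k : ℕ, y = (σ ^ k) x0 ∨ y = α ((σ ^ k) x0) with hinS
  have hSα : ∀ y, inS y → inS (α y) := by
    rintro y ⟨k, h | h⟩
    · exact ⟨k, Or.inr (by rw [h])⟩
    · exact ⟨k, Or.inl (by rw [h, pαα])⟩
  have hSβ : ∀ y, inS y → inS (β y) := by
    rintro y ⟨k, h | h⟩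
    · rcases k with _ | k
      · refine ⟨n - 1, Or.inr ?_⟩
        have hn1 : n - 1 + 1 = n := by omega
        have e0 := pβσ (n - 1) x0
        rw [hn1, hσn] at e0
        rw [h]
        simpa using e0
      · exact ⟨k, Or.inr (by rw [h, pβσ])⟩
    · refine ⟨k + 1, Or.inl ?_⟩
      rw [h, pβα, pow_succ']
      simp [Equiv.Perm.mul_apply]
  have hiff : ∀ g ∈ Subgroup.closure ({α, β} : Set (Equiv.Perm (Fin d))),
      ∀ y, inS y ↔ inS (g y) := by
    intro g hg
    refine Subgroup.closure_induction ?_ ?_ ?_ ?_ hg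
    · intro x hx y
      have hx' : x = α ∨ x = β := by simpa using hx
      rcases hx' with rfl | rfl
      · exact ⟨hSα y, fun h => by have := hSα (x y) h; rwa [pαα] at this⟩
      · refine ⟨hSβ y, fun h => ?_⟩
        have := hSβ (x y) h
        have pββ : x (x y) = y := by
          have := DFunLike.congr_fun hβ y
          simpa [Equiv.Perm.mul_apply] using this
        rwa [pββ] at this
    · intro y; simp
    · intro a b _ _ pa pb y
      rw [Equiv.Perm.mul_apply]
      exact (pb y).trans (pa (b y))
    · intro a _ pa y
      have := pa (a⁻¹ y)
      rwa [Equiv.Perm.coe_inv, Equiv.apply_symm_apply, iff_comm] at this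
  have hSall : ∀ y, inS y := by
    intro y
    obtain ⟨g, hgy⟩ := htrans.exists_smul_eq x0 y
    have : inS ((g : Equiv.Perm (Fin d)) x0) :=
      (hiff g g.2 x0).mp ⟨0, Or.inl (by simp)⟩
    rwa [show (g : Equiv.Perm (Fin d)) x0 = y from hgy] at this
  -- disjointness
  have hdisj : ∀ a b : ℕ, (σ ^ a) x0 ≠ α ((σ ^ b) x0) := by
    intro a b h
    have hj : α x0 = (σ ^ (b + a)) x0 := by
      rw [← pσα b x0, ← h, pow_add]
      simp [Equiv.Perm.mul_apply]
    rcases Nat.even_or_odd (b + a) with ⟨k, hk'⟩ | ⟨k, hk'⟩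
    · -- α (σ^k x0) = σ^k x0
      apply hαf ((σ ^ k) x0)
      have : (σ ^ k) (α ((σ ^ k) x0)) = (σ ^ k) ((σ ^ k) x0) := by
        rw [pσα k x0, hj, hk', pow_add]
        simp [Equiv.Perm.mul_apply]
      exact (σ ^ k).injective this
    · -- β (σ^{k+1} x0) = σ^{k+1} x0
      apply hβf ((σ ^ (k + 1)) x0)
      have h2 : α ((σ ^ k) x0) = (σ ^ (k+1)) x0 := by
        apply (σ ^ k).injective
        rw [pσα k x0, hj, hk']
        rw [show 2*k+1 = k + (k+1) by omega, pow_add]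
        simp [Equiv.Perm.mul_apply]
      rw [pβσ k x0, h2]
  -- minimal period
  set m : ℕ := Function.minimalPeriod (⇑σ) x0 with hmdef
  have hper : Function.IsPeriodicPt (⇑σ) n x0 := by
    show (⇑σ)^[n] x0 = x0
    rw [← Equiv.Perm.coe_pow]
    exact hσn x0
  have hm0 : 0 < m := hper.minimalPeriod_pos hn
  have hmx : (σ ^ m) x0 = x0 := by
    rw [Equiv.Perm.coe_pow]
    exact Function.iterate_minimalPeriod
  have hmod : ∀ k : ℕ, (σ ^ k) x0 = (σ ^ (k % m)) x0 := by
    intro k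
    rw [Equiv.Perm.coe_pow, Equiv.Perm.coe_pow]
    exact (Function.iterate_mod_minimalPeriod_eq).symm
  have hinj : ∀ s t : ℕ, s < m → t < m → (σ ^ s) x0 = (σ ^ t) x0 → s = t := by
    intro s t hs ht h
    refine Function.iterate_injOn_Iio_minimalPeriod hs ht ?_
    show (⇑σ)^[s] x0 = (⇑σ)^[t] x0
    simp only [← Equiv.Perm.coe_pow]
    exact h
  -- counting : d = 2 * m
  have hd2m : d = 2 * m := by
    classical
    set A : Finset (Fin d) := (Finset.range m).image (fun t => (σ ^ t) x0) with hA
    set B : Finset (Fin d) := (Finset.range m).image (fun t => α ((σ ^ t) x0)) with hB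
    have hAcard : A.card = m := by
      rw [hA, Finset.card_image_of_injOn, Finset.card_range]
      intro s hs t ht h
      exact hinj s t (Finset.mem_range.mp hs) (Finset.mem_range.mp ht) h
    have hBcard : B.card = m := by
      rw [hB, Finset.card_image_of_injOn, Finset.card_range]
      intro s hs t ht h
      exact hinj s t (Finset.mem_range.mp hs) (Finset.mem_range.mp ht) (α.injective h)
    have hABdisj : Disjoint A B := by
      rw [Finset.disjoint_left]
      rintro x hxA hxB
      rw [hA, Finset.mem_image] at hxA
      rw [hB, Finset.mem_image] at hxB
      obtain ⟨s, _, hs⟩ := hxA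
      obtain ⟨t, _, ht⟩ := hxB
      exact hdisj s t (hs.trans ht.symm)
    have hunion : A ∪ B = Finset.univ := by
      apply Finset.eq_univ_iff_forall.mpr
      intro y
      rcases hSall y with ⟨k, h | h⟩
      · apply Finset.mem_union_left
        rw [hA, Finset.mem_image]
        exact ⟨k % m, Finset.mem_range.mpr (Nat.mod_lt _ hm0), by rw [← hmod, ← h]⟩
      · apply Finset.mem_union_right
        rw [hB, Finset.mem_image]
        exact ⟨k % m, Finset.mem_range.mpr (Nat.mod_lt _ hm0), by rw [← hmod, ← h]⟩
    have := Finset.card_union_of_disjoint hABdisj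
    rw [hunion, Finset.card_univ, Fintype.card_fin, hAcard, hBcard] at this
    omega
  -- the bijection
  set f : ZMod d → Fin d :=
    fun i => if Even i.val then (σ ^ (i.val / 2)) x0 else α ((σ ^ (i.val / 2)) x0) with hfdef
  -- val arithmetic helpers
  have v1 : (1 : ZMod d).val = 1 := ZMod.val_one d
  have hvlt : ∀ i : ZMod d, i.val < d := fun i => ZMod.val_lt i
  have hplus : ∀ i : ZMod d, i.val + 1 < d → (i + 1).val = i.val + 1 := by
    intro i hi
    rw [ZMod.val_add, v1, Nat.mod_eq_of_lt hi]
  have hsub : ∀ i : ZMod d, 1 ≤ i.val → (i - 1).val = i.val - 1 := by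
    intro i hi
    rw [ZMod.val_sub (by rw [v1]; exact hi), v1]
  have hneg1 : (-1 : ZMod d).val = d - 1 := by
    have hcast : ((d - 1 : ℕ) : ZMod d) = -1 := by
      have : ((d : ℕ) : ZMod d) = 0 := ZMod.natCast_self d
      rw [Nat.cast_sub (by omega : 1 ≤ d), this, Nat.cast_one, zero_sub]
    rw [← hcast, ZMod.val_cast_of_lt (by omega : d - 1 < d)]
  obtain ⟨D, hD⟩ := hdeven
  refine ⟨f, ?_, ?_, ?_⟩
  · -- bijectivity via surjectivity
    rw [Fintype.bijective_iff_surjective_and_card]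
    constructor
    · intro y
      rcases hSall y with ⟨k, h | h⟩
      · refine ⟨((2 * (k % m) : ℕ) : ZMod d), ?_⟩
        have hlt : 2 * (k % m) < d := by have := Nat.mod_lt k hm0; omega
        have hv : ((2 * (k % m) : ℕ) : ZMod d).val = 2 * (k % m) :=
          ZMod.val_cast_of_lt hlt
        rw [hfdef]
        simp only [hv]
        rw [if_pos ⟨k % m, by ring⟩]
        rw [Nat.mul_div_cancel_left _ (by norm_num : 0 < 2), ← hmod, ← h]
      · refine ⟨((2 * (k % m) + 1 : ℕ) : ZMod d), ?_⟩
        have hlt : 2 * (k % m) + 1 < d := by have := Nat.mod_lt k hm0; omega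
        have hv : ((2 * (k % m) + 1 : ℕ) : ZMod d).val = 2 * (k % m) + 1 :=
          ZMod.val_cast_of_lt hlt
        rw [hfdef]
        simp only [hv]
        rw [if_neg (by simp [Nat.even_add_one, Nat.even_iff, Nat.mul_mod_right])]
        have : (2 * (k % m) + 1) / 2 = k % m := by omega
        rw [this, ← hmod, ← h]
    · simp [ZMod.card]
  · -- α relation
    intro i
    by_cases hi : Even i.val
    · rw [if_pos hi]
      obtain ⟨a, ha⟩ := id hi
      have h1 : (i + 1).val = i.val + 1 := by
        refine hplus i ?_
        have := hvlt i
        omega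
      have h2 : ¬ Even ((i + 1).val) := by
        rw [h1, Nat.not_even_iff_odd]
        exact ⟨a, by omega⟩
      have h3 : (i + 1).val / 2 = i.val / 2 := by omega
      rw [hfdef]
      simp only [if_pos hi, if_neg h2, h3]
    · rw [if_neg hi]
      have hodd : Odd i.val := Nat.not_even_iff_odd.mp hi
      obtain ⟨a, ha⟩ := id hodd
      have h1 : (i - 1).val = i.val - 1 := hsub i (by omega)
      have h2 : Even ((i - 1).val) := by
        rw [h1]
        exact ⟨a, by omega⟩
      have h3 : (i - 1).val / 2 = i.val / 2 := by omega
      rw [hfdef]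
      simp only [if_neg hi, if_pos h2, h3]
      rw [pαα]
  · -- β relation
    intro i
    by_cases hi : Even i.val
    · rw [if_pos hi]
      obtain ⟨a, ha⟩ := id hi
      by_cases hi0 : i.val = 0
      · have hiz : i = 0 := (ZMod.val_eq_zero i).mp hi0
        have hm1 : (i - 1).val = d - 1 := by rw [hiz, zero_sub, hneg1]
        have h2 : ¬ Even ((i - 1).val) := by
          rw [hm1, Nat.not_even_iff_odd]
          exact ⟨D - 1, by omega⟩
        have h3 : (i - 1).val / 2 = m - 1 := by omega
        have e0 := pβσ (m - 1) x0
        have hm1' : m - 1 + 1 = m := by omega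
        rw [hm1', hmx] at e0
        rw [hfdef]
        simp only [if_pos hi, if_neg h2, h3, hi0, Nat.zero_div, pow_zero,
          Equiv.Perm.coe_one, id_eq]
        exact e0
      · have hodd1 : 1 ≤ i.val := by omega
        have h1 : (i - 1).val = i.val - 1 := hsub i hodd1
        have h2 : ¬ Even ((i - 1).val) := by
          rw [h1, Nat.not_even_iff_odd]
          exact ⟨a - 1, by omega⟩
        have h3 : (i - 1).val / 2 = i.val / 2 - 1 := by omega
        have h4 : i.val / 2 - 1 + 1 = i.val / 2 := by omega
        rw [hfdef]
        simp only [if_pos hi, if_neg h2, h3]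
        rw [← h4, pβσ]
        have h5 : i.val / 2 - 1 + 1 - 1 = i.val / 2 - 1 := by omega
        rw [h5]
    · rw [if_neg hi]
      have hodd : Odd i.val := Nat.not_even_iff_odd.mp hi
      obtain ⟨a, ha⟩ := id hodd
      by_cases hix : i.val = d - 1
      · have h1 : (i + 1).val = 0 := by
          rw [ZMod.val_add, v1, hix]
          rw [Nat.sub_add_cancel (by omega : 1 ≤ d)]
          exact Nat.mod_self d
        have h2 : Even ((i + 1).val) := by rw [h1]; exact Even.zero
        have hk : i.val / 2 = m - 1 := by omega
        have hk1 : m - 1 + 1 = m := by omega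
        rw [hfdef]
        simp only [if_neg hi, if_pos h2, h1, hk, Nat.zero_div, pow_zero,
          Equiv.Perm.coe_one, id_eq]
        rw [pβα, ← Equiv.Perm.mul_apply, ← pow_succ', hk1, hmx]
        rw [if_pos Even.zero]
      · have h1 : (i + 1).val = i.val + 1 := by
          refine hplus i ?_
          have := hvlt i
          omega
        have h2 : Even ((i + 1).val) := by
          rw [h1]
          exact ⟨a + 1, by omega⟩
        have h3 : (i + 1).val / 2 = i.val / 2 + 1 := by omega
        rw [hfdef]
        simp only [if_neg hi, if_pos h2, h3]
        rw [pβα, ← Equiv.Perm.mul_apply, ← pow_succ']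

/-- Two pairs of fixed-point-free involutions of `Fin d` (`d ≥ 4` even) each generating
a transitive subgroup are simultaneously conjugate. -/
theorem pairs_of_fixed_point_free_involutions_conjugate
    (d : ℕ) (hd : 4 ≤ d) (hdeven : Even d)
    (α β α' β' : Equiv.Perm (Fin d))
    (hα : α * α = 1) (hαf : ∀ x : Fin d, α x ≠ x)
    (hβ : β * β = 1) (hβf : ∀ x : Fin d, β x ≠ x)
    (hα' : α' * α' = 1) (hα'f : ∀ x : Fin d, α' x ≠ x)
    (hβ' : β' * β' = 1) (hβ'f : ∀ x : Fin d, β' x ≠ x)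
    (htrans : MulAction.IsPretransitive (Subgroup.closure {α, β}) (Fin d))
    (htrans' : MulAction.IsPretransitive (Subgroup.closure {α', β'}) (Fin d)) :
    ∃ l : Equiv.Perm (Fin d), l * α * l⁻¹ = α' ∧ l * β * l⁻¹ = β' := by
  obtain ⟨f, hf, hfα, hfβ⟩ := fpf_key d hd hdeven α β hα hαf hβ hβf htrans
  obtain ⟨f', hf', hf'α, hf'β⟩ := fpf_key d hd hdeven α' β' hα' hα'f hβ' hβ'f htrans'
  set e : ZMod d ≃ Fin d := Equiv.ofBijective f hf with hedef
  set e' : ZMod d ≃ Fin d := Equiv.ofBijective f' hf' with he'def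
  set l : Equiv.Perm (Fin d) := e.symm.trans e' with hldef
  have hl : ∀ j : ZMod d, l (f j) = f' j := by
    intro j
    rw [hldef, Equiv.trans_apply,
      show f j = e j from rfl, Equiv.symm_apply_apply]
    rfl
  have hlinv : ∀ j : ZMod d, l⁻¹ (f' j) = f j := by
    intro j
    rw [show (l⁻¹ : Equiv.Perm (Fin d)) = l.symm from rfl, hldef, Equiv.symm_trans_apply,
      show f' j = e' j from rfl, Equiv.symm_apply_apply]
    rfl
  refine ⟨l, ?_, ?_⟩
  · ext x
    obtain ⟨i, rfl⟩ := hf'.2 x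
    rw [Equiv.Perm.mul_apply, Equiv.Perm.mul_apply, hlinv, hfα, hl, hf'α]
  · ext x
    obtain ⟨i, rfl⟩ := hf'.2 x
    rw [Equiv.Perm.mul_apply, Equiv.Perm.mul_apply, hlinv, hfβ, hl, hf'β]
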